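/- Given θ_a, θ_b with 0 < θ_b − θ_a, |sin²θ_b − sin²θ_a| ≤ sin(π/21)·sin(8π/21), and ⌊θ_a/(π/2)⌋ = ⌈θ_b/(π/2)⌉ − 1 (the two angles lie in the same quadrant), there exists an odd integer q with 3 ≤ q ≤ (π/2)/(θ_b − θ_a) such that ⌊qθ_a/(π/2)⌋ = ⌈qθ_b/(π/2)⌉ − 1. -/

import Mathlib

open Real

private lemma qc_sin14 : (0.2223:ℝ) ≤ Real.sin (π/14) := by
  have h1 := Real.pi_gt_d6
  have h2 := Real.pi_lt_d6
  have hx : |π/14| ≤ 1 := by rw [abs_le]; constructor <;> nlinarith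
  have hb := Real.sin_bound hx
  rw [abs_le] at hb
  have h3 : |π/14| ^ 5 = (π/14)^5 := by rw [abs_of_pos]; nlinarith
  rw [h3] at hb
  have ht2 : π/14 ≤ 0.22440 := by nlinarith
  have ht3 : (π/14)^3 ≤ 0.0113009 := by
    calc (π/14)^3 ≤ 0.22440^3 := pow_le_pow_left₀ (by positivity) ht2 _
    _ ≤ 0.0113009 := by norm_num
  have ht4 : (π/14)^5 ≤ 0.00057 := by
    calc (π/14)^5 ≤ 0.22440^5 := pow_le_pow_left₀ (by positivity) ht2 _
    _ ≤ 0.00057 := by norm_num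
  have ht1 : (0.22439:ℝ) ≤ π/14 := by nlinarith
  linarith [hb.1]

private lemma qc_cos37 : Real.cos (3*π/7) = Real.sin (π/14) := by
  rw [← Real.cos_pi_div_two_sub]; ring_nf

private lemma qc_cos37_pos : 0 < Real.cos (3*π/7) := by
  rw [qc_cos37]; linarith [qc_sin14]

private lemma qc_cos215 : (0.9106:ℝ) ≤ Real.cos (2*π/15) := by
  have h1 := Real.pi_gt_d6
  have h2 := Real.pi_lt_d6
  have hx : |2*π/15| ≤ 1 := by rw [abs_le]; constructor <;> nlinarith
  have hb := Real.cos_bound hx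
  rw [abs_le] at hb
  have h3 : |2*π/15| ^ 4 = (2*π/15)^4 := by rw [abs_of_pos]; nlinarith
  rw [h3] at hb
  have ht2 : 2*π/15 ≤ 0.418880 := by nlinarith
  have ht3 : (2*π/15)^2 ≤ 0.1754605 := by
    calc (2*π/15)^2 ≤ 0.418880^2 := pow_le_pow_left₀ (by positivity) ht2 _
    _ ≤ 0.1754605 := by norm_num
  have ht4 : (2*π/15)^4 ≤ 0.0307866 := by
    calc (2*π/15)^4 ≤ 0.418880^4 := pow_le_pow_left₀ (by positivity) ht2 _
    _ ≤ 0.0307866 := by norm_num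
  linarith [hb.1]

private lemma qc_cos935 : (0.6515:ℝ) ≤ Real.cos (9*π/35) := by
  have h1 := Real.pi_gt_d6
  have h2 := Real.pi_lt_d6
  have hx : |9*π/35| ≤ 1 := by rw [abs_le]; constructor <;> nlinarith
  have hb := Real.cos_bound hx
  rw [abs_le] at hb
  have h3 : |9*π/35| ^ 4 = (9*π/35)^4 := by rw [abs_of_pos]; nlinarith
  rw [h3] at hb
  have ht2 : 9*π/35 ≤ 0.807839 := by nlinarith
  have ht3 : (9*π/35)^2 ≤ 0.6526041 := by
    calc (9*π/35)^2 ≤ 0.807839^2 := pow_le_pow_left₀ (by positivity) ht2 _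
    _ ≤ 0.6526041 := by norm_num
  have ht4 : (9*π/35)^4 ≤ 0.4258922 := by
    calc (9*π/35)^4 ≤ 0.807839^4 := pow_le_pow_left₀ (by positivity) ht2 _
    _ ≤ 0.4258922 := by norm_num
  linarith [hb.1]

private lemma qc_cos25 : Real.cos (2*π/5) ≤ 0.31416 := by
  have h2 := Real.pi_lt_d6
  have h1 := Real.pi_gt_d6
  have he : Real.cos (2*π/5) = Real.sin (π/10) := by
    rw [← Real.cos_pi_div_two_sub]; ring_nf
  rw [he]
  have := Real.sin_lt (x := π/10) (by positivity)
  nlinarith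

private lemma qc_cos5 : (0.809:ℝ) ≤ Real.cos (π/5) := by
  rw [Real.cos_pi_div_five]
  have h5 : (2.236:ℝ) ≤ Real.sqrt 5 := by
    nlinarith [Real.sq_sqrt (by norm_num : (5:ℝ) ≥ 0), Real.sqrt_nonneg (5:ℝ)]
  linarith

private lemma qc_cos27 : (0.6116:ℝ) ≤ Real.cos (2*π/7) := by
  have h1 := Real.pi_gt_d6
  have h2 := Real.pi_lt_d6
  have he : Real.cos (2*π/7) = Real.sin (3*π/14) := by
    rw [← Real.cos_pi_div_two_sub]; ring_nf
  rw [he]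
  have hx : |3*π/14| ≤ 1 := by rw [abs_le]; constructor <;> nlinarith
  have hb := Real.sin_bound hx
  rw [abs_le] at hb
  have h3 : |3*π/14| ^ 5 = (3*π/14)^5 := by rw [abs_of_pos]; nlinarith
  rw [h3] at hb
  have ht2 : 3*π/14 ≤ 0.673199 := by nlinarith
  have ht3 : (3*π/14)^3 ≤ 0.3050918 := by
    calc (3*π/14)^3 ≤ 0.673199^3 := pow_le_pow_left₀ (by positivity) ht2 _
    _ ≤ 0.3050918 := by norm_num
  have ht4 : (3*π/14)^5 ≤ 0.13827 := by
    calc (3*π/14)^5 ≤ 0.673199^5 := pow_le_pow_left₀ (by positivity) ht2 _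
    _ ≤ 0.13827 := by norm_num
  have ht1 : (0.673198:ℝ) ≤ 3*π/14 := by nlinarith
  linarith [hb.1]

set_option maxHeartbeats 1000000 in
/-- Core lemma: interval in the left half of [0,1]. -/
private lemma qc_core (x y : ℝ) (hx : 0 ≤ x) (hy : y ≤ 1) (hxy : x < y) (hs : x + y ≤ 1)
    (hc : Real.cos (π*x) - Real.cos (π*y) ≤ 1/2 - Real.cos (3*π/7)) :
    ∃ q : ℕ, Odd q ∧ 3 ≤ q ∧ (q:ℝ)*(y - x) ≤ 1 ∧
      ∀ k : ℤ, ¬((q:ℝ)*x < k ∧ (k:ℝ) < (q:ℝ)*y) := by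
  have hπ := Real.pi_pos
  have hc37 := qc_cos37_pos
  have ppl : ∀ {a b : ℝ}, a ≤ b → π*a ≤ π*b :=
    fun h => mul_le_mul_of_nonneg_left h hπ.le
  have pplt : ∀ {a b : ℝ}, a < b → π*a < π*b :=
    fun h => (mul_lt_mul_iff_right₀ hπ).mpr h
  obtain ⟨A, hA⟩ : ∃ A, A = π*((x+y)/2) := ⟨_, rfl⟩
  obtain ⟨B, hB⟩ : ∃ B, B = π*((y-x)/2) := ⟨_, rfl⟩
  have key : Real.cos (π*x) - Real.cos (π*y) = 2 * Real.sin A * Real.sin B := by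
    rw [Real.cos_sub_cos, hA, hB,
      show (π*x + π*y)/2 = π*((x+y)/2) by ring,
      show (π*x - π*y)/2 = -(π*((y-x)/2)) by ring, Real.sin_neg]
    ring
  rw [key] at hc
  have hB0 : 0 < B := by rw [hB]; exact mul_pos hπ (by linarith)
  have hB2 : B ≤ π/2 := by
    rw [hB]; have := ppl (show (y-x)/2 ≤ 1/2 by linarith); linarith
  have hA2 : A ≤ π/2 := by
    rw [hA]; have := ppl (show (x+y)/2 ≤ 1/2 by linarith); linarith
  have hBA : B ≤ A := by
    rw [hA, hB]; exact ppl (by linarith)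
  have hsinB0 : 0 < Real.sin B := Real.sin_pos_of_pos_of_lt_pi hB0 (by linarith)
  have hsAB : Real.sin B ≤ Real.sin A :=
    Real.sin_le_sin_of_le_of_le_pi_div_two (by linarith) hA2 hBA
  -- gap at most 1/3
  have F1 : y - x ≤ 1/3 := by
    by_contra h
    push_neg at h
    have h6 : Real.sin (π/6) < Real.sin B := by
      apply Real.sin_lt_sin_of_lt_of_le_pi_div_two (by linarith) hB2
      rw [hB]; have := pplt (show 1/6 < (y-x)/2 by linarith); linarith
    rw [Real.sin_pi_div_six] at h6
    have t2 : Real.sin B * Real.sin B ≤ Real.sin A * Real.sin B :=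
      mul_le_mul_of_nonneg_right hsAB hsinB0.le
    nlinarith
  by_cases h3 : ∀ k : ℤ, ¬((3:ℝ)*x < k ∧ (k:ℝ) < (3:ℝ)*y)
  · refine ⟨3, ⟨1, by norm_num⟩, le_refl 3, by push_cast; linarith, by push_cast; exact h3⟩
  push_neg at h3
  obtain ⟨k, hk1, hk2⟩ := h3
  have hkeq : k = 1 := by
    have hu : (k:ℝ) < 2 := by linarith
    have hl : (0:ℝ) < (k:ℝ) := by linarith
    have hu' : k < 2 := by exact_mod_cast hu
    have hl' : 0 < k := by exact_mod_cast hl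
    omega
  subst hkeq
  push_cast at hk1 hk2
  have hx3 : x < 1/3 := by linarith
  have hy3 : 1/3 < y := by linarith
  -- gap at most 1/5
  have F2 : y - x ≤ 1/5 := by
    by_contra h
    push_neg at h
    have hABl : π/3 - B ≤ A := by
      rw [hA, hB]
      have := ppl (show 1/3 - (y-x)/2 ≤ (x+y)/2 by linarith)
      linarith
    have h1 : Real.sin (π/3 - B) ≤ Real.sin A := by
      apply Real.sin_le_sin_of_le_of_le_pi_div_two _ hA2 hABl
      rw [hB]
      have := ppl (show (y-x)/2 ≤ 1/3 by linarith)
      linarith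
    have hid : 2 * Real.sin (π/3 - B) * Real.sin B
        = Real.cos (π/3 - 2*B) - Real.cos (π/3) := by
      rw [Real.cos_sub_cos, show (π/3 - 2*B + π/3)/2 = π/3 - B by ring,
        show (π/3 - 2*B - π/3)/2 = -B by ring, Real.sin_neg]
      ring
    have hcc : Real.cos (2*π/15) < Real.cos (π/3 - 2*B) := by
      apply Real.cos_lt_cos_of_nonneg_of_le_pi
      · rw [hB]; have := ppl (show 2*((y-x)/2) ≤ 1/3 by linarith); linarith
      · have := ppl (show (2:ℝ)/15 ≤ 1 by norm_num); linarith
      · rw [hB]; have := pplt (show 1/3 - 2*((y-x)/2) < 2/15 by linarith); linarith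
    have hch : 2 * Real.sin (π/3 - B) * Real.sin B ≤ 2 * Real.sin A * Real.sin B := by
      nlinarith [mul_le_mul_of_nonneg_right h1 hsinB0.le]
    rw [hid, Real.cos_pi_div_three] at hch
    rw [qc_cos37] at hc
    linarith [qc_cos215, qc_sin14]
  by_cases h5 : ∀ k : ℤ, ¬((5:ℝ)*x < k ∧ (k:ℝ) < (5:ℝ)*y)
  · refine ⟨5, ⟨2, by norm_num⟩, by norm_num, by push_cast; linarith, by push_cast; exact h5⟩
  push_neg at h5
  obtain ⟨k, hk1, hk2⟩ := h5
  have hkeq : k = 1 ∨ k = 2 := by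
    have hu : (k:ℝ) < 3 := by linarith
    have hl : (0:ℝ) < (k:ℝ) := by linarith
    have hu' : k < 3 := by exact_mod_cast hu
    have hl' : 0 < k := by exact_mod_cast hl
    omega
  rcases hkeq with hkeq | hkeq
  · -- k = 1 impossible: x < 1/5 while y > 1/3
    exfalso
    subst hkeq
    push_cast at hk1 hk2
    have hc1 : Real.cos (π/5) < Real.cos (π*x) := by
      apply Real.cos_lt_cos_of_nonneg_of_le_pi (mul_nonneg hπ.le hx)
      · have := ppl (show (1:ℝ)/5 ≤ 1 by norm_num); linarith
      · have := pplt (show x < 1/5 by linarith); linarith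
    have hc2 : Real.cos (π*y) < Real.cos (π/3) := by
      apply Real.cos_lt_cos_of_nonneg_of_le_pi (by positivity)
      · have := ppl hy; linarith
      · have := pplt hy3; linarith
    rw [Real.cos_pi_div_three] at hc2
    rw [← key, qc_cos37] at hc
    linarith [qc_cos5, qc_sin14]
  subst hkeq
  push_cast at hk1 hk2
  have hx25 : x < 2/5 := by linarith
  have hy25 : 2/5 < y := by linarith
  -- gap at most 1/7
  have F3 : y - x ≤ 1/7 := by
    by_contra h
    push_neg at h
    have hABl : 2*π/5 - B ≤ A := by
      rw [hA, hB]
      have := ppl (show 2/5 - (y-x)/2 ≤ (x+y)/2 by linarith)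
      linarith
    have h1 : Real.sin (2*π/5 - B) ≤ Real.sin A := by
      apply Real.sin_le_sin_of_le_of_le_pi_div_two _ hA2 hABl
      rw [hB]
      have := ppl (show (y-x)/2 ≤ 2/5 by linarith)
      linarith
    have hid : 2 * Real.sin (2*π/5 - B) * Real.sin B
        = Real.cos (2*π/5 - 2*B) - Real.cos (2*π/5) := by
      rw [Real.cos_sub_cos, show (2*π/5 - 2*B + 2*π/5)/2 = 2*π/5 - B by ring,
        show (2*π/5 - 2*B - 2*π/5)/2 = -B by ring, Real.sin_neg]
      ring
    have hcc : Real.cos (9*π/35) < Real.cos (2*π/5 - 2*B) := by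
      apply Real.cos_lt_cos_of_nonneg_of_le_pi
      · rw [hB]; have := ppl (show 2*((y-x)/2) ≤ 2/5 by linarith); linarith
      · have := ppl (show (9:ℝ)/35 ≤ 1 by norm_num); linarith
      · rw [hB]; have := pplt (show 2/5 - 2*((y-x)/2) < 9/35 by linarith); linarith
    have hch : 2 * Real.sin (2*π/5 - B) * Real.sin B ≤ 2 * Real.sin A * Real.sin B := by
      nlinarith [mul_le_mul_of_nonneg_right h1 hsinB0.le]
    rw [hid] at hch
    rw [qc_cos37] at hc
    linarith [qc_cos935, qc_cos25, qc_sin14]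
  by_cases h7 : ∀ k : ℤ, ¬((7:ℝ)*x < k ∧ (k:ℝ) < (7:ℝ)*y)
  · refine ⟨7, ⟨3, by norm_num⟩, by norm_num, by push_cast; linarith, by push_cast; exact h7⟩
  exfalso
  push_neg at h7
  obtain ⟨k, hk1, hk2⟩ := h7
  have hkeq : k = 1 ∨ k = 2 ∨ k = 3 := by
    have hu : (k:ℝ) < 4 := by linarith
    have hl : (0:ℝ) < (k:ℝ) := by linarith
    have hu' : k < 4 := by exact_mod_cast hu
    have hl' : 0 < k := by exact_mod_cast hl
    omega
  rcases hkeq with hkeq | hkeq | hkeq <;> subst hkeq <;> push_cast at hk1 hk2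
  · linarith
  · have hc1 : Real.cos (2*π/7) < Real.cos (π*x) := by
      apply Real.cos_lt_cos_of_nonneg_of_le_pi (mul_nonneg hπ.le hx)
      · have := ppl (show (2:ℝ)/7 ≤ 1 by norm_num); linarith
      · have := pplt (show x < 2/7 by linarith); linarith
    have hc2 : Real.cos (π*y) < Real.cos (2*π/5) := by
      apply Real.cos_lt_cos_of_nonneg_of_le_pi (by positivity)
      · have := ppl hy; linarith
      · have := pplt hy25; linarith
    rw [← key, qc_cos37] at hc
    linarith [qc_cos27, qc_cos25, qc_sin14]
  · have hc1 : Real.cos (π/3) < Real.cos (π*x) := by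
      apply Real.cos_lt_cos_of_nonneg_of_le_pi (mul_nonneg hπ.le hx)
      · have := ppl (show (1:ℝ)/3 ≤ 1 by norm_num); linarith
      · have := pplt hx3; linarith
    have hc2 : Real.cos (π*y) < Real.cos (3*π/7) := by
      apply Real.cos_lt_cos_of_nonneg_of_le_pi (by positivity)
      · have := ppl hy; linarith
      · have := pplt (show 3/7 < y by linarith); linarith
    rw [Real.cos_pi_div_three] at hc1
    rw [← key] at hc
    linarith

/-- Core lemma without the left-half assumption, by reflection symmetry. -/
private lemma qc_core2 (x y : ℝ) (hx : 0 ≤ x) (hy : y ≤ 1) (hxy : x < y)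
    (hc : Real.cos (π*x) - Real.cos (π*y) ≤ 1/2 - Real.cos (3*π/7)) :
    ∃ q : ℕ, Odd q ∧ 3 ≤ q ∧ (q:ℝ)*(y - x) ≤ 1 ∧
      ∀ k : ℤ, ¬((q:ℝ)*x < k ∧ (k:ℝ) < (q:ℝ)*y) := by
  by_cases hs : x + y ≤ 1
  · exact qc_core x y hx hy hxy hs hc
  · push_neg at hs
    have hc' : Real.cos (π*(1-y)) - Real.cos (π*(1-x)) ≤ 1/2 - Real.cos (3*π/7) := by
      rw [show π*(1-y) = π - π*y by ring, show π*(1-x) = π - π*x by ring,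
        Real.cos_pi_sub, Real.cos_pi_sub]
      linarith
    obtain ⟨q, hq1, hq2, hq3, hq4⟩ :=
      qc_core (1-y) (1-x) (by linarith) (by linarith) (by linarith) (by linarith) hc'
    refine ⟨q, hq1, hq2, by linarith [hq3], ?_⟩
    rintro k ⟨h1, h2⟩
    apply hq4 ((q:ℤ) - k)
    push_cast
    constructor <;> linarith

set_option maxHeartbeats 1000000 in
theorem find_next_K_exists (θa θb : ℝ) (h0 : 0 ≤ θa) (hab : 0 < θb - θa)
    (hdiff : |Real.sin θb ^ 2 - Real.sin θa ^ 2| ≤ Real.sin (π / 21) * Real.sin (8 * π / 21))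
    (hquad : ⌊θa / (π / 2)⌋ = ⌈θb / (π / 2)⌉ - 1) :
    ∃ q : ℕ, Odd q ∧ 3 ≤ q ∧ (q : ℝ) ≤ (π / 2) / (θb - θa) ∧
      ⌊(q : ℝ) * θa / (π / 2)⌋ = ⌈(q : ℝ) * θb / (π / 2)⌉ - 1 := by
  have hπ := Real.pi_pos
  have hp : (0:ℝ) < π/2 := by linarith
  obtain ⟨R, hR⟩ : ∃ R : ℤ, R = ⌊θa / (π / 2)⌋ := ⟨_, rfl⟩
  obtain ⟨x, hxdef⟩ : ∃ x : ℝ, x = θa/(π/2) - R := ⟨_, rfl⟩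
  obtain ⟨y, hydef⟩ : ∃ y : ℝ, y = θb/(π/2) - R := ⟨_, rfl⟩
  have hceil : ⌈θb / (π / 2)⌉ = R + 1 := by omega
  have hθax : θa = (π/2) * (x + R) := by
    rw [hxdef]; field_simp; ring
  have hθby : θb = (π/2) * (y + R) := by
    rw [hydef]; field_simp; ring
  have hx : 0 ≤ x := by
    have := Int.floor_le (θa / (π/2))
    rw [← hR] at this
    rw [hxdef]; linarith
  have hx1 : x < 1 := by
    have := Int.lt_floor_add_one (θa / (π/2))
    rw [← hR] at this
    push_cast at this
    rw [hxdef]; linarith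
  have hy : y ≤ 1 := by
    have h1 := Int.le_ceil (θb / (π/2))
    rw [hceil] at h1
    push_cast at h1
    rw [hydef]; linarith
  have hxy : x < y := by
    rw [hxdef, hydef]
    have : θa/(π/2) < θb/(π/2) := by
      gcongr
      linarith
    linarith
  -- convert the trigonometric hypothesis
  have hsq : Real.sin θb ^ 2 - Real.sin θa ^ 2
      = (Real.cos (2*θa) - Real.cos (2*θb))/2 := by
    rw [Real.sin_sq_eq_half_sub, Real.sin_sq_eq_half_sub]; ring
  have h2a : Real.cos (2*θa) = (-1)^R * Real.cos (π*x) := by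
    rw [show 2*θa = π*x + R*π by rw [hθax]; push_cast; ring, Real.cos_add_int_mul_pi]
  have h2b : Real.cos (2*θb) = (-1)^R * Real.cos (π*y) := by
    rw [show 2*θb = π*y + R*π by rw [hθby]; push_cast; ring, Real.cos_add_int_mul_pi]
  have hmono : Real.cos (π*y) ≤ Real.cos (π*x) := by
    apply Real.cos_le_cos_of_nonneg_of_le_pi (mul_nonneg hπ.le hx)
    · have := mul_le_mul_of_nonneg_left hy hπ.le; linarith
    · exact mul_le_mul_of_nonneg_left hxy.le hπ.le
  have habs : |Real.sin θb ^ 2 - Real.sin θa ^ 2|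
      = (Real.cos (π*x) - Real.cos (π*y))/2 := by
    rw [hsq, h2a, h2b, show (-1:ℝ)^R * Real.cos (π*x) - (-1)^R * Real.cos (π*y)
      = (-1)^R * (Real.cos (π*x) - Real.cos (π*y)) by ring, abs_div, abs_mul,
      abs_of_nonneg (by linarith : (0:ℝ) ≤ Real.cos (π*x) - Real.cos (π*y))]
    have hone : |(-1 : ℝ)^R| = 1 := by
      rcases Int.even_or_odd R with he | he
      · rw [he.neg_one_zpow]; norm_num
      · rw [Odd.neg_one_zpow he]; norm_num
    rw [hone]
    norm_num
  have hrhs : Real.sin (π/21) * Real.sin (8*π/21) = (1/2 - Real.cos (3*π/7))/2 := by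
    rw [show (1:ℝ)/2 = Real.cos (π/3) by rw [Real.cos_pi_div_three], Real.cos_sub_cos,
      show (π/3 + 3*π/7)/2 = 8*π/21 by ring, show (π/3 - 3*π/7)/2 = -(π/21) by ring,
      Real.sin_neg]
    ring
  have hc : Real.cos (π*x) - Real.cos (π*y) ≤ 1/2 - Real.cos (3*π/7) := by
    rw [habs, hrhs] at hdiff
    linarith
  obtain ⟨q, hq1, hq2, hq3, hq4⟩ := qc_core2 x y hx hy hxy hc
  have hq0 : (0:ℝ) < q := by
    have : (3:ℝ) ≤ (q:ℝ) := by exact_mod_cast hq2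
    linarith
  refine ⟨q, hq1, hq2, ?_, ?_⟩
  · rw [show θb - θa = (π/2)*(y - x) by rw [hθax, hθby]; ring]
    rw [le_div_iff₀ (by nlinarith)]
    have := mul_le_mul_of_nonneg_left hq3 hp.le
    nlinarith
  · have e1 : (q:ℝ)*θa/(π/2) = (q:ℝ)*x + ((q*R : ℤ):ℝ) := by
      rw [hθax]; push_cast; field_simp
    have e2 : (q:ℝ)*θb/(π/2) = (q:ℝ)*y + ((q*R : ℤ):ℝ) := by
      rw [hθby]; push_cast; field_simp
    rw [e1, e2, Int.floor_add_intCast, Int.ceil_add_intCast]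
    have hqxy : (q:ℝ)*x < (q:ℝ)*y := by
      apply mul_lt_mul_of_pos_left hxy hq0
    obtain ⟨n, hn⟩ : ∃ n : ℤ, n = ⌈(q:ℝ)*y⌉ := ⟨_, rfl⟩
    have hn1 : (q:ℝ)*y ≤ n := by rw [hn]; exact Int.le_ceil _
    have hn2 : (n:ℝ) < (q:ℝ)*y + 1 := by
      rw [hn]; exact_mod_cast Int.ceil_lt_add_one _
    have hfl : ⌊(q:ℝ)*x⌋ = n - 1 := by
      rw [Int.floor_eq_iff]
      constructor
      · by_contra hlt
        push_neg at hlt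
        apply hq4 (n-1)
        push_cast
        push_cast at hlt
        constructor <;> linarith
      · push_cast; linarith
    omega
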